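/- Let ι > 0 and let M ≥ 4π/ι be an integer. Fix d, μ*, ν*, ξ* ≥ 0 and let H ⊆ 𝕊 × ℝ (with 𝕊 = ℝ/4πℤ) be the projection of {(μ+ν, dν+ξ) : |μ| ≤ μ*, |ν| ≤ ν*, |ξ| ≤ ξ*}, and let H_ι = H ∩ ([−ι,ι] × ℝ) (first coordinate taken in a fundamental domain). Then H is contained in the union of the (2M+1)² translates H_ι + ((k_μ+k_ν)ι, d·k_ν·ι) over integers |k_μ|, |k_ν| ≤ M; consequently |H| ≤ (2M+1)²·|H_ι|. -/

import Mathlib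

open MeasureTheory

instance : Fact (0 < 4 * Real.pi) := ⟨by positivity⟩

private instance addRightInv : (volume : Measure (AddCircle (4*Real.pi) × ℝ)).IsAddRightInvariant :=
  inferInstanceAs (((volume : Measure (AddCircle (4*Real.pi))).prod volume).IsAddRightInvariant)

private lemma coe_helper (a b : ℝ) (n : ℤ) (h : a = b + (n:ℝ) * (4*Real.pi)) :
    ((a : ℝ) : AddCircle (4*Real.pi)) = (b : ℝ) := by
  subst h
  rw [AddCircle.coe_add]
  have : (((n:ℝ) * (4*Real.pi) : ℝ) : AddCircle (4*Real.pi)) = 0 :=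
    (AddCircle.coe_eq_zero_iff _).mpr ⟨n, by simp [zsmul_eq_mul]⟩
  rw [this, add_zero]

private lemma key_aux (ι : ℝ) (hι : 0 < ι) (M : ℕ) (hM : 4 * Real.pi / ι ≤ (M : ℝ))
    (x : ℝ) (hx : 0 ≤ x) :
    ∃ k j : ℤ, |k| ≤ (M : ℤ) ∧ |x - 4 * Real.pi * j - k * ι| ≤ ι / 2 ∧
      |x - 4 * Real.pi * j - k * ι| ≤ |x| ∧ |x - k * ι| ≤ |x| := by
  have hπ : (0:ℝ) < 4 * Real.pi := by positivity
  set j : ℤ := ⌊x / (4 * Real.pi)⌋ with hj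
  have hj0 : 0 ≤ j := Int.floor_nonneg.mpr (div_nonneg hx hπ.le)
  have hjr : (0:ℝ) ≤ (j:ℝ) := by exact_mod_cast hj0
  set y : ℝ := x - 4 * Real.pi * j with hy
  have hfl := Int.floor_le (x / (4 * Real.pi))
  have hfu := Int.lt_floor_add_one (x / (4 * Real.pi))
  rw [← hj] at hfl hfu
  have hxd : 4 * Real.pi * (x / (4 * Real.pi)) = x := by field_simp
  have hy0 : 0 ≤ y := by
    rw [hy]; nlinarith [mul_le_mul_of_nonneg_left hfl hπ.le]
  have hy4 : y < 4 * Real.pi := by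
    rw [hy]; nlinarith [mul_lt_mul_of_pos_left hfu hπ]
  have hyx : y ≤ x := by rw [hy]; nlinarith
  set k : ℤ := round (y / ι) with hk
  have habs : |y / ι - k| ≤ 1/2 := by rw [hk]; exact abs_sub_round _
  have hk0 : 0 ≤ k := by
    rw [hk, round_eq]
    exact Int.floor_nonneg.mpr (by positivity)
  have hkr : (0:ℝ) ≤ (k:ℝ) := by exact_mod_cast hk0
  have hrew : y - k * ι = (y / ι - k) * ι := by field_simp
  have h1 : |y - k * ι| ≤ ι / 2 := by
    rw [hrew, abs_mul, abs_of_pos hι]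
    nlinarith [abs_nonneg (y / ι - k)]
  have hkub : (k:ℝ) ≤ y / ι + 1/2 := by
    have := (abs_le.mp habs).1; linarith
  have hkM : |k| ≤ (M : ℤ) := by
    rw [abs_of_nonneg hk0]
    have h2 : y / ι < 4 * Real.pi / ι := by gcongr
    have hMr : (k:ℝ) < ((M:ℤ):ℝ) + 1 := by push_cast; linarith
    exact Int.lt_add_one_iff.mp (by exact_mod_cast hMr)
  have hcase : k = 0 ∨ ι / 2 ≤ y := by
    rcases eq_or_lt_of_le hk0 with h | h
    · exact Or.inl h.symm
    · right
      have h1k : (1:ℝ) ≤ (k:ℝ) := by exact_mod_cast h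
      have h2 := (abs_le.mp habs).2
      have h3 : (1:ℝ)/2 ≤ y / ι := by linarith
      calc ι / 2 = (1/2) * ι := by ring
        _ ≤ (y/ι) * ι := by nlinarith
        _ = y := by field_simp
  have h2 : |y - k * ι| ≤ |x| := by
    rw [abs_of_nonneg hx]
    rcases hcase with h | h
    · rw [h]; simp only [Int.cast_zero, zero_mul, sub_zero]
      rw [abs_of_nonneg hy0]; exact hyx
    · rw [abs_le]; obtain ⟨ha, hb⟩ := abs_le.mp h1
      constructor <;> linarith
  have h3 : |x - k * ι| ≤ |x| := by
    rw [abs_of_nonneg hx, abs_le]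
    have hkι : (k:ℝ) * ι ≤ 2 * x := by
      rcases hcase with h | h
      · rw [h]; push_cast; nlinarith
      · have := (abs_le.mp h1).1; nlinarith
    constructor <;> nlinarith
  refine ⟨k, j, hkM, ?_, ?_, h3⟩ <;>
  · have e : x - 4*Real.pi*(j:ℝ) - (k:ℝ)*ι = y - (k:ℝ)*ι := by rw [hy]
    rw [e]
    first | exact h1 | exact h2

private lemma key (ι : ℝ) (hι : 0 < ι) (M : ℕ) (hM : 4 * Real.pi / ι ≤ (M : ℝ)) (x : ℝ) :
    ∃ k j : ℤ, |k| ≤ (M : ℤ) ∧ |x - 4 * Real.pi * j - k * ι| ≤ ι / 2 ∧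
      |x - 4 * Real.pi * j - k * ι| ≤ |x| ∧ |x - k * ι| ≤ |x| := by
  rcases le_or_gt 0 x with hx | hx
  · exact key_aux ι hι M hM x hx
  · obtain ⟨k, j, hk, h1, h2, h3⟩ := key_aux ι hι M hM (-x) (by linarith)
    refine ⟨-k, -j, by simpa using hk, ?_, ?_, ?_⟩
    · rw [show x - 4*Real.pi*(-j:ℤ) - (-k:ℤ)*ι = -((-x) - 4*Real.pi*j - k*ι) from by push_cast; ring,
        abs_neg]
      exact h1
    · rw [show x - 4*Real.pi*(-j:ℤ) - (-k:ℤ)*ι = -((-x) - 4*Real.pi*j - k*ι) from by push_cast; ring,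
        abs_neg, ← abs_neg x]
      exact h2
    · rw [show x - (-k:ℤ)*ι = -((-x) - k*ι) from by push_cast; ring, abs_neg, ← abs_neg x]
      exact h3

private lemma measure_part (ι d : ℝ) (M : ℕ) (H Hι : Set (AddCircle (4 * Real.pi) × ℝ))
    (T : ℤ → ℤ → Set (AddCircle (4 * Real.pi) × ℝ))
    (hT : T = fun kμ kν =>
      (fun q : AddCircle (4 * Real.pi) × ℝ =>
          (q.1 + ((((kμ + kν : ℤ) : ℝ) * ι : ℝ) : AddCircle (4 * Real.pi)),
            q.2 + d * (kν : ℝ) * ι)) '' Hι)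
    (hsub : H ⊆ ⋃ (kμ : ℤ) (kν : ℤ) (_ : |kμ| ≤ (M : ℤ)) (_ : |kν| ≤ (M : ℤ)), T kμ kν) :
    volume H ≤ ((2 * M + 1) ^ 2 : ℕ) * volume Hι := by
  set S : Finset ℤ := Finset.Icc (-(M:ℤ)) (M:ℤ) with hS
  have hScard : S.card = 2 * M + 1 := by
    rw [hS, Int.card_Icc]; omega
  calc volume H ≤ volume (⋃ (kμ : ℤ) (kν : ℤ) (_ : |kμ| ≤ (M : ℤ)) (_ : |kν| ≤ (M : ℤ)), T kμ kν) :=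
        measure_mono hsub
    _ ≤ volume (⋃ p ∈ S ×ˢ S, T p.1 p.2) := by
        refine measure_mono ?_
        intro x hx
        simp only [Set.mem_iUnion] at hx
        obtain ⟨kμ, kν, h1, h2, hmem⟩ := hx
        exact Set.mem_biUnion (x := ((kμ, kν) : ℤ × ℤ)) (Finset.mem_product.mpr
          ⟨Finset.mem_Icc.mpr (abs_le.mp h1), Finset.mem_Icc.mpr (abs_le.mp h2)⟩) hmem
    _ ≤ ∑ p ∈ S ×ˢ S, volume (T p.1 p.2) := measure_biUnion_finset_le _ _
    _ = ∑ p ∈ S ×ˢ S, volume Hι := by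
        refine Finset.sum_congr rfl fun p _ => ?_
        simp only [hT]
        have : (fun q : AddCircle (4 * Real.pi) × ℝ =>
            (q.1 + ((((p.1 + p.2 : ℤ) : ℝ) * ι : ℝ) : AddCircle (4 * Real.pi)),
              q.2 + d * (p.2 : ℝ) * ι)) = fun q =>
              q + (((((p.1 + p.2 : ℤ) : ℝ) * ι : ℝ) : AddCircle (4 * Real.pi)),
                d * (p.2 : ℝ) * ι) := rfl
        rw [this, Set.image_add_right, measure_preimage_add_right]
    _ = ((2 * M + 1) ^ 2 : ℕ) * volume Hι := by
        rw [Finset.sum_const, Finset.card_product, hScard, nsmul_eq_mul]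
        ring

theorem stmt_19 (ι : ℝ) (hι : 0 < ι) (M : ℕ) (hM : 4 * Real.pi / ι ≤ (M : ℝ))
    (d μs νs ξs : ℝ) (hd : 0 ≤ d) (hμ : 0 ≤ μs) (hν : 0 ≤ νs) (hξ : 0 ≤ ξs) :
    ((fun p : ℝ × ℝ => ((p.1 : AddCircle (4 * Real.pi)), p.2)) ''
        {p : ℝ × ℝ | ∃ μ ν ξ : ℝ,
          |μ| ≤ μs ∧ |ν| ≤ νs ∧ |ξ| ≤ ξs ∧ p = (μ + ν, d * ν + ξ)} ⊆
      ⋃ (kμ : ℤ) (kν : ℤ) (_ : |kμ| ≤ (M : ℤ)) (_ : |kν| ≤ (M : ℤ)),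
        (fun q : AddCircle (4 * Real.pi) × ℝ =>
            (q.1 + ((((kμ + kν : ℤ) : ℝ) * ι : ℝ) : AddCircle (4 * Real.pi)),
              q.2 + d * (kν : ℝ) * ι)) ''
          (((fun p : ℝ × ℝ => ((p.1 : AddCircle (4 * Real.pi)), p.2)) ''
              {p : ℝ × ℝ | ∃ μ ν ξ : ℝ,
                |μ| ≤ μs ∧ |ν| ≤ νs ∧ |ξ| ≤ ξs ∧ p = (μ + ν, d * ν + ξ)}) ∩
            {q : AddCircle (4 * Real.pi) × ℝ |
              ∃ x : ℝ, |x| ≤ ι ∧ (x : AddCircle (4 * Real.pi)) = q.1})) ∧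
    volume ((fun p : ℝ × ℝ => ((p.1 : AddCircle (4 * Real.pi)), p.2)) ''
        {p : ℝ × ℝ | ∃ μ ν ξ : ℝ,
          |μ| ≤ μs ∧ |ν| ≤ νs ∧ |ξ| ≤ ξs ∧ p = (μ + ν, d * ν + ξ)}) ≤
      ((2 * M + 1) ^ 2 : ℕ) *
        volume (((fun p : ℝ × ℝ => ((p.1 : AddCircle (4 * Real.pi)), p.2)) ''
            {p : ℝ × ℝ | ∃ μ ν ξ : ℝ,
              |μ| ≤ μs ∧ |ν| ≤ νs ∧ |ξ| ≤ ξs ∧ p = (μ + ν, d * ν + ξ)}) ∩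
          {q : AddCircle (4 * Real.pi) × ℝ |
            ∃ x : ℝ, |x| ≤ ι ∧ (x : AddCircle (4 * Real.pi)) = q.1}) := by
  have hsub : ((fun p : ℝ × ℝ => ((p.1 : AddCircle (4 * Real.pi)), p.2)) ''
        {p : ℝ × ℝ | ∃ μ ν ξ : ℝ,
          |μ| ≤ μs ∧ |ν| ≤ νs ∧ |ξ| ≤ ξs ∧ p = (μ + ν, d * ν + ξ)} ⊆
      ⋃ (kμ : ℤ) (kν : ℤ) (_ : |kμ| ≤ (M : ℤ)) (_ : |kν| ≤ (M : ℤ)),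
        (fun q : AddCircle (4 * Real.pi) × ℝ =>
            (q.1 + ((((kμ + kν : ℤ) : ℝ) * ι : ℝ) : AddCircle (4 * Real.pi)),
              q.2 + d * (kν : ℝ) * ι)) ''
          (((fun p : ℝ × ℝ => ((p.1 : AddCircle (4 * Real.pi)), p.2)) ''
              {p : ℝ × ℝ | ∃ μ ν ξ : ℝ,
                |μ| ≤ μs ∧ |ν| ≤ νs ∧ |ξ| ≤ ξs ∧ p = (μ + ν, d * ν + ξ)}) ∩
            {q : AddCircle (4 * Real.pi) × ℝ |
              ∃ x : ℝ, |x| ≤ ι ∧ (x : AddCircle (4 * Real.pi)) = q.1})) := by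
    rintro q ⟨p, ⟨μ, ν, ξ, hμ1, hν1, hξ1, rfl⟩, rfl⟩
    obtain ⟨kμ, jμ, hkμ, hμa, hμb, -⟩ := key ι hι M hM μ
    obtain ⟨kν, jν, hkν, hνa, -, hνc⟩ := key ι hι M hM ν
    simp only [Set.mem_iUnion]
    refine ⟨kμ, kν, hkμ, hkν, ?_⟩
    set μ₀ : ℝ := μ - 4 * Real.pi * jμ - kμ * ι with hμ₀
    set ν₀ : ℝ := ν - kν * ι with hν₀
    set w : ℝ := ν - 4 * Real.pi * jν - kν * ι with hw
    refine ⟨((↑(μ₀ + ν₀) : AddCircle (4*Real.pi)), d * ν₀ + ξ), ⟨⟨(μ₀ + ν₀, d * ν₀ + ξ),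
      ⟨μ₀, ν₀, ξ, hμb.trans hμ1, hνc.trans hν1, hξ1, rfl⟩, rfl⟩, ⟨μ₀ + w, ?_, ?_⟩⟩, ?_⟩
    · calc |μ₀ + w| ≤ |μ₀| + |w| := abs_add_le _ _
        _ ≤ ι / 2 + ι / 2 := add_le_add hμa hνa
        _ = ι := by ring
    · exact coe_helper (μ₀ + w) (μ₀ + ν₀) (-jν) (by push_cast; rw [hw, hν₀]; ring)
    · show ((↑(μ₀ + ν₀) + ↑(((kμ + kν : ℤ) : ℝ) * ι) : AddCircle (4*Real.pi)),
          d * ν₀ + ξ + d * kν * ι) = ((↑(μ + ν) : AddCircle (4*Real.pi)), d * ν + ξ)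
      refine Prod.ext ?_ ?_
      · rw [← AddCircle.coe_add]
        exact coe_helper _ _ (-jμ) (by push_cast; rw [hμ₀, hν₀]; ring)
      · show d * ν₀ + ξ + d * kν * ι = d * ν + ξ
        rw [hν₀]; ring
  exact ⟨hsub, measure_part ι d M _ _ _ rfl hsub⟩
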